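/- Let V be a finite collection of vectors in the plane ℝ² (possibly with multiplicity, i.e., an indexed finite family), and let κ > 0 and δ ≥ 0. Suppose that 1 − δ ≤ ‖v‖ ≤ 1 + δ for every v ∈ V, and that ∑_{v ∈ V} ‖v − w‖ ≥ κ|V| for every unit vector w ∈ ℝ². Then provided δ ≤ κ/2, there exist subcollections X, Y ⊆ V, both of size at least κ|V|/40, such that ‖x − y‖ ≥ κ/20 for all x ∈ X and y ∈ Y. -/

import Mathlib

open Finset

open Finset

/-- 1-D sweep lemma: for real values `f i`, either there is a threshold giving two
large separated sets, or almost all values lie in a slab of width `s`. -/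
lemma oneD_sweep {ι : Type*} [Fintype ι] [Nonempty ι] (f : ι → ℝ) (m s : ℝ)
    (hm : 0 < m) (hs : 0 ≤ s) (hmn : m ≤ (Fintype.card ι : ℝ)) :
    (∃ X Y : Finset ι, m ≤ (X.card : ℝ) ∧ m ≤ (Y.card : ℝ) ∧
      ∀ x ∈ X, ∀ y ∈ Y, s ≤ f y - f x)
    ∨ ∃ t : ℝ, (Fintype.card ι : ℝ) - 2 * m ≤
        ((univ.filter (fun i => t ≤ f i ∧ f i < t + s)).card : ℝ) := by
  classical
  set n := Fintype.card ι with hn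
  set k := ⌈m⌉₊ with hkdef
  have hk1 : 0 < k := Nat.ceil_pos.mpr hm
  have hkn : k ≤ n := Nat.ceil_le.mpr hmn
  have hmk : m ≤ (k : ℝ) := Nat.le_ceil m
  have hklt : (k : ℝ) < m + 1 := Nat.ceil_lt_add_one hm.le
  set T := (univ.image f).filter (fun t => k ≤ (univ.filter (fun i => f i ≤ t)).card) with hT
  have hTne : T.Nonempty := by
    have himg : (univ.image f).Nonempty := (univ_nonempty).image f
    refine ⟨(univ.image f).max' himg, mem_filter.mpr ⟨(univ.image f).max'_mem himg, ?_⟩⟩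
    have : (univ.filter (fun i => f i ≤ (univ.image f).max' himg)) = univ := by
      ext i
      simp only [mem_filter, mem_univ, true_and, iff_true]
      exact (univ.image f).le_max' _ (mem_image_of_mem f (mem_univ i))
    rw [this, card_univ]
    exact hkn
  set tstar := T.min' hTne with htstar
  have h1 : k ≤ (univ.filter (fun i => f i ≤ tstar)).card :=
    (mem_filter.mp (T.min'_mem hTne)).2
  have h2 : (univ.filter (fun i => f i < tstar)).card < k := by
    by_contra h
    push_neg at h
    set L := univ.filter (fun i => f i < tstar) with hL
    have hLne : L.Nonempty := card_pos.mp (lt_of_lt_of_le hk1 h)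
    have hLimg : (L.image f).Nonempty := hLne.image f
    obtain ⟨i', hi'L, hfi'⟩ := mem_image.mp ((L.image f).max'_mem hLimg)
    have ht'lt : f i' < tstar := (mem_filter.mp hi'L).2
    have ht'T : f i' ∈ T := by
      refine mem_filter.mpr ⟨mem_image_of_mem f (mem_univ i'), ?_⟩
      refine le_trans h (card_le_card ?_)
      intro i hi
      refine mem_filter.mpr ⟨mem_univ i, ?_⟩
      calc f i ≤ (L.image f).max' hLimg := (L.image f).le_max' _ (mem_image_of_mem f hi)
        _ = f i' := hfi'.symm
    have := T.min'_le _ ht'T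
    linarith
  by_cases hY : m ≤ ((univ.filter (fun i => tstar + s ≤ f i)).card : ℝ)
  · left
    refine ⟨univ.filter (fun i => f i ≤ tstar), univ.filter (fun i => tstar + s ≤ f i),
      le_trans hmk (Nat.cast_le.mpr h1), hY, ?_⟩
    intro x hx y hy
    have hx' := (mem_filter.mp hx).2
    have hy' := (mem_filter.mp hy).2
    linarith
  · right
    push_neg at hY
    refine ⟨tstar, ?_⟩
    set L := univ.filter (fun i => f i < tstar) with hL
    set Y := univ.filter (fun i => tstar + s ≤ f i) with hYdef
    set M := univ.filter (fun i => tstar ≤ f i ∧ f i < tstar + s) with hM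
    have hMeq : M = (L ∪ Y)ᶜ := by
      ext i
      simp only [hM, hL, hYdef, mem_filter, mem_univ, true_and, mem_compl, mem_union,
        not_or, not_lt, not_le]
    have hdisj : Disjoint L Y := by
      rw [disjoint_left]
      intro i hiL hiY
      have := (mem_filter.mp hiL).2
      have := (mem_filter.mp hiY).2
      linarith
    have hcard : M.card = n - (L.card + Y.card) := by
      rw [hMeq, card_compl, card_union_of_disjoint hdisj]
    have hLY : L.card + Y.card ≤ n := by
      rw [← card_union_of_disjoint hdisj]; exact card_le_univ _
    have hYlt : (Y.card : ℝ) < (k : ℝ) := lt_of_lt_of_le hY hmk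
    have hLlt : (L.card : ℝ) < (k : ℝ) := by exact_mod_cast h2
    have hMcast : (M.card : ℝ) = (n : ℝ) - ((L.card : ℝ) + (Y.card : ℝ)) := by
      rw [hcard]
      push_cast [Nat.cast_sub hLY]
      ring
    have hLk : (L.card : ℝ) + 1 ≤ (k : ℝ) := by exact_mod_cast h2
    have hYk : (Y.card : ℝ) + 1 ≤ (k : ℝ) := by
      have : Y.card < k := by exact_mod_cast lt_of_lt_of_le hY hmk
      exact_mod_cast this
    rw [hMcast]
    linarith


lemma coord_abs_le_norm (u : EuclideanSpace ℝ (Fin 2)) (j : Fin 2) : |u j| ≤ ‖u‖ := by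
  rw [EuclideanSpace.norm_eq]
  have h : |u j| ^ 2 ≤ ∑ i, ‖u i‖ ^ 2 := by
    have := Finset.single_le_sum (f := fun i => ‖u i‖ ^ 2)
      (fun i _ => by positivity) (Finset.mem_univ j)
    simpa [Real.norm_eq_abs, sq_abs] using this
  calc |u j| = Real.sqrt (|u j| ^ 2) := (Real.sqrt_sq (abs_nonneg _)).symm
    _ ≤ Real.sqrt (∑ i, ‖u i‖ ^ 2) := Real.sqrt_le_sqrt h
    _ = Real.sqrt (∑ i, ‖u i‖ ^ 2) := rfl

lemma norm_sq_eq (u : EuclideanSpace ℝ (Fin 2)) : ‖u‖ ^ 2 = (u 0) ^ 2 + (u 1) ^ 2 := by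
  rw [EuclideanSpace.norm_eq, Real.sq_sqrt (by positivity)]
  simp [Fin.sum_univ_two, Real.norm_eq_abs, sq_abs]

set_option maxHeartbeats 1000000

/-- let V = (v_i)_{i ∈ ι} be a finite family of vectors in the plane with
1 − δ ≤ ‖v_i‖ ≤ 1 + δ for all i, and ∑_i ‖v_i − w‖ ≥ κ|V| for every unit vector w.
If δ ≤ κ/2, there are subcollections X, Y of size at least κ|V|/40 with
‖v_x − v_y‖ ≥ κ/20 for all x ∈ X, y ∈ Y. -/

theorem geometric_separation {ι : Type*} [Fintype ι]
    (v : ι → EuclideanSpace ℝ (Fin 2)) (κ δ : ℝ) (hκ : 0 < κ) (hδ : 0 ≤ δ)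
    (hδκ : δ ≤ κ / 2)
    (hnorm : ∀ i, 1 - δ ≤ ‖v i‖ ∧ ‖v i‖ ≤ 1 + δ)
    (hfar : ∀ w : EuclideanSpace ℝ (Fin 2), ‖w‖ = 1 →
      κ * (Fintype.card ι : ℝ) ≤ ∑ i, ‖v i - w‖) :
    ∃ X Y : Finset ι,
      κ * (Fintype.card ι : ℝ) / 40 ≤ (X.card : ℝ) ∧
      κ * (Fintype.card ι : ℝ) / 40 ≤ (Y.card : ℝ) ∧
      ∀ x ∈ X, ∀ y ∈ Y, κ / 20 ≤ ‖v x - v y‖ := by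
  classical
  by_cases hn0 : Fintype.card ι = 0
  · exact ⟨∅, ∅, by simp [hn0], by simp [hn0], by simp⟩
  have hne : Nonempty ι := Fintype.card_pos_iff.mp (Nat.pos_of_ne_zero hn0)
  have hnpos : (0 : ℝ) < (Fintype.card ι : ℝ) := by
    exact_mod_cast Nat.pos_of_ne_zero hn0
  set N : ℝ := (Fintype.card ι : ℝ) with hN
  -- a unit vector
  have he1 : ‖(EuclideanSpace.single (0 : Fin 2) (1:ℝ))‖ = 1 := by
    rw [EuclideanSpace.norm_single]; norm_num
  -- κ ≤ 2 + δ, hence κ ≤ 4 and δ ≤ 2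
  have hκ2δ : κ ≤ 2 + δ := by
    have hsum := hfar _ he1
    have hub : ∑ i, ‖v i - EuclideanSpace.single (0 : Fin 2) (1:ℝ)‖ ≤ (2 + δ) * N := by
      calc ∑ i, ‖v i - EuclideanSpace.single (0 : Fin 2) (1:ℝ)‖
          ≤ ∑ _i : ι, (2 + δ) := by
            refine sum_le_sum fun i _ => ?_
            have h1 := norm_sub_le (v i) (EuclideanSpace.single (0 : Fin 2) (1:ℝ))
            have h2 := (hnorm i).2
            rw [he1] at h1
            linarith
        _ = (2 + δ) * N := by rw [sum_const, card_univ, nsmul_eq_mul, mul_comm]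
    have := le_trans hsum hub
    exact le_of_mul_le_mul_right (by linarith [mul_comm κ N, mul_comm (2+δ) N]) hnpos
  have hδ2 : δ ≤ 2 := by linarith
  have hκ4 : κ ≤ 4 := by linarith
  set m : ℝ := κ * N / 40 with hm'
  have hm : 0 < m := by positivity
  have hmn : m ≤ N := by nlinarith
  -- apply the sweep lemma in both coordinate directions
  have key : ∀ j : Fin 2,
      (∃ X Y : Finset ι, m ≤ (X.card : ℝ) ∧ m ≤ (Y.card : ℝ) ∧
        ∀ x ∈ X, ∀ y ∈ Y, κ / 20 ≤ (v y) j - (v x) j)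
      ∨ ∃ t : ℝ, N - 2 * m ≤
          ((univ.filter (fun i => t ≤ (v i) j ∧ (v i) j < t + κ / 20)).card : ℝ) :=
    fun j => oneD_sweep (fun i => (v i) j) m (κ / 20) hm (by positivity) hmn
  -- converter: a separated pair in some coordinate gives the result
  have done_of : ∀ j : Fin 2, ∀ X Y : Finset ι, m ≤ (X.card : ℝ) → m ≤ (Y.card : ℝ) →
      (∀ x ∈ X, ∀ y ∈ Y, κ / 20 ≤ (v y) j - (v x) j) →
      ∃ X Y : Finset ι, κ * N / 40 ≤ (X.card : ℝ) ∧ κ * N / 40 ≤ (Y.card : ℝ) ∧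
        ∀ x ∈ X, ∀ y ∈ Y, κ / 20 ≤ ‖v x - v y‖ := by
    intro j X Y hX hY hsep
    refine ⟨X, Y, hX, hY, fun x hx y hy => ?_⟩
    have h1 := hsep x hx y hy
    have h2 : |(v y - v x) j| ≤ ‖v y - v x‖ := coord_abs_le_norm _ j
    have h3 : (v y - v x) j = (v y) j - (v x) j := rfl
    have h4 : ‖v y - v x‖ = ‖v x - v y‖ := norm_sub_rev _ _
    rw [h3] at h2
    calc κ / 20 ≤ (v y) j - (v x) j := h1
      _ ≤ |(v y) j - (v x) j| := le_abs_self _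
      _ ≤ ‖v y - v x‖ := h2
      _ = ‖v x - v y‖ := h4
  rcases key 0 with ⟨X, Y, hX, hY, hsep⟩ | ⟨t0, ht0⟩
  · exact done_of 0 X Y hX hY hsep
  rcases key 1 with ⟨X, Y, hX, hY, hsep⟩ | ⟨t1, ht1⟩
  · exact done_of 1 X Y hX hY hsep
  -- both directions fail: contradiction
  exfalso
  set S0 := univ.filter (fun i => t0 ≤ (v i) 0 ∧ (v i) 0 < t0 + κ / 20) with hS0
  set S1 := univ.filter (fun i => t1 ≤ (v i) 1 ∧ (v i) 1 < t1 + κ / 20) with hS1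
  set S := S0 ∩ S1 with hS
  have hcardS : N - 4 * m ≤ (S.card : ℝ) := by
    have h5 : S0.card + S1.card = (S0 ∪ S1).card + S.card := (card_union_add_card_inter S0 S1).symm
    have h6 : (S0 ∪ S1).card ≤ Fintype.card ι := card_le_univ _
    have h6' : ((S0 ∪ S1).card : ℝ) ≤ N := by rw [hN]; exact_mod_cast h6
    have h5' : (S0.card : ℝ) + (S1.card : ℝ) = ((S0 ∪ S1).card : ℝ) + (S.card : ℝ) := by
      exact_mod_cast h5
    linarith
  have hSne : S.Nonempty := by
    rw [← card_pos]
    rcases Nat.eq_zero_or_pos S.card with h | h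
    · exfalso
      rw [h] at hcardS
      push_cast at hcardS
      nlinarith
    · exact h
  obtain ⟨i0, hi0S⟩ := hSne
  -- a unit vector w close to v i0
  obtain ⟨w, hw1, hwd⟩ : ∃ w : EuclideanSpace ℝ (Fin 2), ‖w‖ = 1 ∧ ‖v i0 - w‖ ≤ δ := by
    by_cases h0 : v i0 = 0
    · refine ⟨EuclideanSpace.single (0 : Fin 2) (1:ℝ), he1, ?_⟩
      have h1 := (hnorm i0).1
      rw [h0, norm_zero] at h1
      rw [h0, zero_sub, norm_neg, he1]
      linarith
    · have hr : 0 < ‖v i0‖ := norm_pos_iff.mpr h0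
      refine ⟨‖v i0‖⁻¹ • v i0, ?_, ?_⟩
      · rw [norm_smul, norm_inv, norm_norm, inv_mul_cancel₀ hr.ne']
      · have heq : v i0 - ‖v i0‖⁻¹ • v i0 = (1 - ‖v i0‖⁻¹) • v i0 := by
          rw [sub_smul, one_smul]
        rw [heq, norm_smul, Real.norm_eq_abs]
        have : |1 - ‖v i0‖⁻¹| * ‖v i0‖ = |‖v i0‖ - 1| := by
          rw [← abs_of_pos hr, ← abs_mul]
          congr 1
          field_simp
          rw [abs_of_pos hr]; ring
        rw [this, abs_le]
        constructor
        · linarith [(hnorm i0).1]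
        · linarith [(hnorm i0).2]
  -- every point of S is close to w
  have hcluster : ∀ i ∈ S, ‖v i - w‖ ≤ 23 * κ / 40 := by
    intro i hi
    obtain ⟨hiS0, hiS1⟩ := mem_inter.mp hi
    obtain ⟨hi0S0, hi0S1⟩ := mem_inter.mp hi0S
    have ha := (mem_filter.mp hiS0).2
    have hb := (mem_filter.mp hiS1).2
    have ha0 := (mem_filter.mp hi0S0).2
    have hb0 := (mem_filter.mp hi0S1).2
    have hsq : ‖v i - v i0‖ ^ 2 ≤ (3 * κ / 40) ^ 2 := by
      rw [norm_sq_eq]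
      have e0 : (v i - v i0) 0 = (v i) 0 - (v i0) 0 := rfl
      have e1 : (v i - v i0) 1 = (v i) 1 - (v i0) 1 := rfl
      rw [e0, e1]
      nlinarith [ha.1, ha.2, hb.1, hb.2, ha0.1, ha0.2, hb0.1, hb0.2, hκ.le]
    have hle : ‖v i - v i0‖ ≤ 3 * κ / 40 := by
      calc ‖v i - v i0‖ = Real.sqrt (‖v i - v i0‖ ^ 2) := (Real.sqrt_sq (norm_nonneg _)).symm
        _ ≤ Real.sqrt ((3 * κ / 40) ^ 2) := Real.sqrt_le_sqrt hsq
        _ = 3 * κ / 40 := Real.sqrt_sq (by positivity)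
    have htri : ‖v i - w‖ ≤ ‖v i - v i0‖ + ‖v i0 - w‖ := by
      have := dist_triangle (v i) (v i0) w
      simpa [dist_eq_norm] using this
    linarith
  -- final contradiction
  have hsum := hfar w hw1
  have hsplit : ∑ i ∈ S, ‖v i - w‖ + ∑ i ∈ Sᶜ, ‖v i - w‖ = ∑ i, ‖v i - w‖ :=
    S.sum_add_sum_compl _
  have hsumS : ∑ i ∈ S, ‖v i - w‖ ≤ (S.card : ℝ) * (23 * κ / 40) := by
    have := Finset.sum_le_card_nsmul S (fun i => ‖v i - w‖) (23 * κ / 40) hcluster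
    simpa [nsmul_eq_mul] using this
  have hsumC : ∑ i ∈ Sᶜ, ‖v i - w‖ ≤ (Sᶜ.card : ℝ) * 4 := by
    have hb : ∀ i ∈ Sᶜ, ‖v i - w‖ ≤ 4 := by
      intro i _
      have h1 := norm_sub_le (v i) w
      have h2 := (hnorm i).2
      rw [hw1] at h1
      linarith
    have := Finset.sum_le_card_nsmul Sᶜ (fun i => ‖v i - w‖) 4 hb
    simpa [nsmul_eq_mul] using this
  have hcompl : (Sᶜ.card : ℝ) = N - (S.card : ℝ) := by
    rw [hN, card_compl]
    push_cast [Nat.cast_sub (card_le_univ S)]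
    ring
  have hSleN : (S.card : ℝ) ≤ N := by rw [hN]; exact_mod_cast card_le_univ S
  have hsum' : κ * N ≤ ∑ i, ‖v i - w‖ := by rw [hN]; exact hsum
  rw [hm'] at hcardS
  have e1 : κ * N ≤ (S.card : ℝ) * (23 * κ / 40) + ((Sᶜ).card : ℝ) * 4 := by
    linarith
  rw [hcompl] at e1
  have e2 : (S.card : ℝ) * (23 * κ / 40) ≤ N * (23 * κ / 40) :=
    mul_le_mul_of_nonneg_right hSleN (by positivity)
  have e3 : (N - (S.card : ℝ)) * 4 ≤ (κ * N / 10) * 4 :=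
    mul_le_mul_of_nonneg_right (by linarith) (by norm_num)
  have e4 : 0 < κ * N := mul_pos hκ hnpos
  linarith
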